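/- For any matrix X in R^{n×d} and weight matrix W in R^{d×d}, the Dirichlet energy E(XW) = tr((XW)^T L̃ (XW)) satisfies E(XW) ≤ μ_max² E(X), where μ_max is the largest singular value of W and L̃ is a symmetric positive semi-definite matrix. -/

import Mathlib

open Matrix BigOperators

lemma trace_transpose_mul_self_eq {n d : ℕ} (A : Matrix (Fin n) (Fin d) ℝ) :
    (Aᵀ * A).trace = ∑ i, (A i) ⬝ᵥ (A i) := by
  rw [Matrix.trace]
  simp only [Matrix.diag, Matrix.mul_apply, Matrix.transpose_apply, dotProduct]
  rw [Finset.sum_comm]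

/-- Dirichlet energy bound under right-multiplication by a weight matrix:
`E(XW) ≤ μ_max² E(X)` where `μ_max` is the largest singular value of `W`
(encoded by the operator-norm bound `‖vW‖² ≤ μ_max²‖v‖²` for all rows `v`)
and `L̃` is symmetric positive semi-definite. -/
theorem stmt_0 (n d : ℕ) (L : Matrix (Fin n) (Fin n) ℝ) (hL : L.PosSemidef)
    (X : Matrix (Fin n) (Fin d) ℝ) (W : Matrix (Fin d) (Fin d) ℝ) (μmax : ℝ)
    (hμ : ∀ v : Fin d → ℝ,
      (Matrix.vecMul v W) ⬝ᵥ (Matrix.vecMul v W) ≤ μmax ^ 2 * (v ⬝ᵥ v)) :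
    ((X * W)ᵀ * L * (X * W)).trace ≤ μmax ^ 2 * (Xᵀ * L * X).trace := by
  open scoped MatrixOrder in
  set B := CFC.sqrt L with hB
  open scoped MatrixOrder in
  have hBsym : Bᵀ = B := (CFC.sqrt_nonneg L).posSemidef.1
  open scoped MatrixOrder in
  have hBB : B * B = L := CFC.sqrt_mul_sqrt_self L hL.nonneg
  have key : ∀ Y : Matrix (Fin n) (Fin d) ℝ, (Yᵀ * L * Y).trace = ((B * Y)ᵀ * (B * Y)).trace := by
    intro Y
    rw [Matrix.transpose_mul, hBsym, ← hBB]
    rw [Matrix.mul_assoc, Matrix.mul_assoc, Matrix.mul_assoc]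
  rw [key, key, trace_transpose_mul_self_eq, trace_transpose_mul_self_eq,
    Finset.mul_sum]
  have hrow : ∀ i, (B * (X * W)) i = Matrix.vecMul ((B * X) i) W := by
    intro i
    ext j
    simp [Matrix.mul_apply, Matrix.vecMul, dotProduct, Finset.sum_mul, Finset.mul_sum]
    rw [Finset.sum_comm]
    congr 1; ext k; congr 1; ext l; ring
  apply Finset.sum_le_sum
  intro i _
  rw [hrow]
  exact hμ _
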